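/- arXiv:1505.02273 — 8 statements merged into one kernel-verified Lean document; each statement's English description precedes it below -/
import Mathlib

section
/- Let psi(p,q) = (1/3)(a p^3 + 3b p^2 q + 3c p q^2 + d q^3). If p, q : ℝ → ℝ are differentiable and satisfy the Hamilton equations -p' = ∂psi/∂q and q' = ∂psi/∂p along a curve, then p'' = 2 F p and q'' = 2 F q, where F = (b^2 - ac) p^2 + (bc - ad) p q + (c^2 - bd) q^2. -/
theorem cubic_second_order (a b c d : ℝ) (p q : ℝ → ℝ)
    (hp1 : Differentiable ℝ p) (hq1 : Differentiable ℝ q)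
    (hp2 : Differentiable ℝ (deriv p)) (hq2 : Differentiable ℝ (deriv q))
    (hp : ∀ t, deriv p t = -(b*(p t)^2 + 2*c*(p t)*(q t) + d*(q t)^2))
    (hq : ∀ t, deriv q t = a*(p t)^2 + 2*b*(p t)*(q t) + c*(q t)^2) :
    ∀ t, deriv (deriv p) t
        = 2 * ((b^2 - a*c)*(p t)^2 + (b*c - a*d)*(p t)*(q t) + (c^2 - b*d)*(q t)^2) * p t
      ∧ deriv (deriv q) t
        = 2 * ((b^2 - a*c)*(p t)^2 + (b*c - a*d)*(p t)*(q t) + (c^2 - b*d)*(q t)^2) * q t := by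
  intro t
  have hpt : HasDerivAt p (-(b*(p t)^2 + 2*c*(p t)*(q t) + d*(q t)^2)) t := by
    have h := (hp1 t).hasDerivAt; rwa [hp t] at h
  have hqt : HasDerivAt q (a*(p t)^2 + 2*b*(p t)*(q t) + c*(q t)^2) t := by
    have h := (hq1 t).hasDerivAt; rwa [hq t] at h
  set P' := -(b*(p t)^2 + 2*c*(p t)*(q t) + d*(q t)^2) with hP
  set Q' := a*(p t)^2 + 2*b*(p t)*(q t) + c*(q t)^2 with hQ
  have h1 := ((((hpt.pow 2).const_mul b).add ((hpt.mul hqt).const_mul (2*c))).add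
      ((hqt.pow 2).const_mul d)).neg
  have h2 := (((hpt.pow 2).const_mul a).add ((hpt.mul hqt).const_mul (2*b))).add
      ((hqt.pow 2).const_mul c)
  have ep : deriv p = fun s => -(b*(p s)^2 + 2*c*(p s * q s) + d*(q s)^2) := by
    funext s; rw [hp s]; ring
  have eq' : deriv q = fun s => a*(p s)^2 + 2*b*(p s * q s) + c*(q s)^2 := by
    funext s; rw [hq s]; ring
  constructor
  · rw [ep]; refine h1.deriv.trans ?_; rw [hP, hQ]; push_cast; ring
  · rw [eq']; refine h2.deriv.trans ?_; rw [hP, hQ]; push_cast; ring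
end

section
/- Let p, q : ℝ → ℝ satisfy the Hamilton equations p' = -(b p^2 + 2c p q + d q^2), q' = a p^2 + 2b p q + c q^2, and define F(t) = (b^2 - ac) p(t)^2 + (bc - ad) p(t) q(t) + (c^2 - bd) q(t)^2. Then F'(t) equals -J(p(t), q(t)), where J = (2b^3 + a^2 d - 3abc) p^3 + 3(abd + b^2 c - 2ac^2) p^2 q + 3(2b^2 d - bc^2 - acd) p q^2 + (3bcd - ad^2 - 2c^3) q^3 is the cubic covariant of U = a p^3 + 3b p^2 q + 3c p q^2 + d q^3. -/
theorem cubic_F_deriv (a b c d : ℝ) (p q : ℝ → ℝ)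
    (hp1 : Differentiable ℝ p) (hq1 : Differentiable ℝ q)
    (hp : ∀ t, deriv p t = -(b*(p t)^2 + 2*c*(p t)*(q t) + d*(q t)^2))
    (hq : ∀ t, deriv q t = a*(p t)^2 + 2*b*(p t)*(q t) + c*(q t)^2) :
    ∀ t, deriv (fun t =>
        (b^2 - a*c)*(p t)^2 + (b*c - a*d)*(p t)*(q t) + (c^2 - b*d)*(q t)^2) t
      = -((2*b^3 + a^2*d - 3*a*b*c)*(p t)^3 + 3*(a*b*d + b^2*c - 2*a*c^2)*(p t)^2*(q t)
        + 3*(2*b^2*d - b*c^2 - a*c*d)*(p t)*(q t)^2 + (3*b*c*d - a*d^2 - 2*c^3)*(q t)^3) := by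
  intro t
  have hpd : HasDerivAt p (deriv p t) t := (hp1 t).hasDerivAt
  have hqd : HasDerivAt q (deriv q t) t := (hq1 t).hasDerivAt
  have h : HasDerivAt (fun t =>
      (b^2 - a*c)*(p t)^2 + (b*c - a*d)*(p t)*(q t) + (c^2 - b*d)*(q t)^2)
      ((b^2 - a*c)*(2*(p t)*(deriv p t))
        + ((b*c - a*d)*(deriv p t)*(q t) + (b*c - a*d)*(p t)*(deriv q t))
        + (c^2 - b*d)*(2*(q t)*(deriv q t))) t := by
    have h1 := ((hpd.pow 2).const_mul (b^2 - a*c))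
    have h2 := (((hpd.const_mul (b*c - a*d)).mul hqd))
    have h3 := ((hqd.pow 2).const_mul (c^2 - b*d))
    convert (h1.add h2).add h3 using 1
    · rfl
    · rfl
    · rfl
    · norm_num
  rw [h.deriv, hp t, hq t]
  ring
end

section
/- Let p, q : ℝ → ℝ satisfy the Hamilton equations p' = -(b p^2 + 2c p q + d q^2), q' = a p^2 + 2b p q + c q^2, let F = (b^2 - ac) p^2 + (bc - ad) p q + (c^2 - bd) q^2 along the curve, let psi = (1/3)(a p^3 + 3b p^2 q + 3c p q^2 + d q^3), and let D = a^2 d^2 - 3b^2 c^2 + 4ac^3 + 4b^3 d - 6abcd be the discriminant. Then F satisfies the differential equation (F')^2 = 4 F^3 + D (3 psi)^2 along the curve; that is, (F')^2 = 4 F^3 - g_3 where g_3 = -D (3 psi)^2. -/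
theorem cubic_weierstrass_equation (a b c d : ℝ) (p q : ℝ → ℝ)
    (hp1 : Differentiable ℝ p) (hq1 : Differentiable ℝ q)
    (hp : ∀ t, deriv p t = -(b*(p t)^2 + 2*c*(p t)*(q t) + d*(q t)^2))
    (hq : ∀ t, deriv q t = a*(p t)^2 + 2*b*(p t)*(q t) + c*(q t)^2) :
    ∀ t,
      (deriv (fun t =>
        (b^2 - a*c)*(p t)^2 + (b*c - a*d)*(p t)*(q t) + (c^2 - b*d)*(q t)^2) t)^2
      = 4 * ((b^2 - a*c)*(p t)^2 + (b*c - a*d)*(p t)*(q t) + (c^2 - b*d)*(q t)^2)^3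
        + (a^2*d^2 - 3*b^2*c^2 + 4*a*c^3 + 4*b^3*d - 6*a*b*c*d)
          * (3 * ((1/3) * (a*(p t)^3 + 3*b*(p t)^2*(q t) + 3*c*(p t)*(q t)^2 + d*(q t)^3)))^2 := by
  intro t
  have hpd : HasDerivAt p (deriv p t) t := (hp1 t).hasDerivAt
  have hqd : HasDerivAt q (deriv q t) t := (hq1 t).hasDerivAt
  have hF : HasDerivAt (fun t =>
      (b^2 - a*c)*(p t)^2 + (b*c - a*d)*(p t)*(q t) + (c^2 - b*d)*(q t)^2)
      ((b^2 - a*c)*(2*(p t)^1*deriv p t) + (b*c - a*d)*(deriv p t * q t + p t * deriv q t)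
        + (c^2 - b*d)*(2*(q t)^1*deriv q t)) t := by
    have h := (((hpd.pow 2).const_mul (b^2-a*c)).add ((hpd.mul hqd).const_mul (b*c-a*d))).add
      ((hqd.pow 2).const_mul (c^2-b*d))
    refine (h.congr_of_eventuallyEq (Filter.Eventually.of_forall fun x => ?_)).congr_deriv ?_
    · simp only [Pi.add_apply, Pi.pow_apply, Pi.mul_apply]; ring
    · push_cast; ring
  rw [hF.deriv, hp, hq]
  ring
end

section
/- Let p, q : ℝ → ℝ satisfy the Hamilton equations p' = -(b p^2 + 2c p q + d q^2), q' = a p^2 + 2b p q + c q^2, and let F = (b^2 - ac) p^2 + (bc - ad) p q + (c^2 - bd) q^2 along the curve. Then F satisfies the second-order equation F'' = 6 F^2 along the curve. -/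
theorem cubic_F_second_order (a b c d : ℝ) (p q : ℝ → ℝ)
    (hp1 : Differentiable ℝ p) (hq1 : Differentiable ℝ q)
    (hp2 : Differentiable ℝ (deriv p)) (hq2 : Differentiable ℝ (deriv q))
    (hp : ∀ t, deriv p t = -(b*(p t)^2 + 2*c*(p t)*(q t) + d*(q t)^2))
    (hq : ∀ t, deriv q t = a*(p t)^2 + 2*b*(p t)*(q t) + c*(q t)^2) :
    ∀ t, deriv (deriv (fun t =>
        (b^2 - a*c)*(p t)^2 + (b*c - a*d)*(p t)*(q t) + (c^2 - b*d)*(q t)^2)) t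
      = 6 * ((b^2 - a*c)*(p t)^2 + (b*c - a*d)*(p t)*(q t) + (c^2 - b*d)*(q t)^2)^2 := by
  intro t
  have hF1 : deriv (fun t =>
      (b^2 - a*c)*(p t)^2 + (b*c - a*d)*(p t)*(q t) + (c^2 - b*d)*(q t)^2)
      = fun s => (-2*b^3 + 3*a*b*c - a^2*d)*(p s)^3
        + (3*(2*a*c^2 - b^2*c - a*b*d))*((p s)^2*(q s))
        + (3*(b*c^2 + a*c*d - 2*b^2*d))*((p s)*(q s)^2)
        + (2*c^3 - 3*b*c*d + a*d^2)*(q s)^3 := by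
    funext s
    have hP := (hp1 s).hasDerivAt
    have hQ := (hq1 s).hasDerivAt
    have h := (((hP.pow 2).const_mul (b^2 - a*c)).add
      ((hP.mul hQ).const_mul (b*c - a*d))).add
      ((hQ.pow 2).const_mul (c^2 - b*d))
    have h2 : deriv (fun t =>
        (b^2 - a*c)*(p t)^2 + (b*c - a*d)*(p t)*(q t) + (c^2 - b*d)*(q t)^2)
        s = deriv (fun x => (b^2 - a*c)*(p x)^2 + (b*c - a*d)*((p x)*(q x))
          + (c^2 - b*d)*(q x)^2) s := by
      congr 1; funext x; ring
    rw [h2]; erw [h.deriv]; rw [hp s, hq s]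
    push_cast
    ring
  rw [hF1]
  have hP := (hp1 t).hasDerivAt
  have hQ := (hq1 t).hasDerivAt
  have h := ((((hP.pow 3).const_mul (-2*b^3 + 3*a*b*c - a^2*d)).add
    (((hP.pow 2).mul hQ).const_mul (3*(2*a*c^2 - b^2*c - a*b*d)))).add
    ((hP.mul (hQ.pow 2)).const_mul (3*(b*c^2 + a*c*d - 2*b^2*d)))).add
    ((hQ.pow 3).const_mul (2*c^3 - 3*b*c*d + a*d^2))
  erw [h.deriv]; simp only [Pi.pow_apply]; rw [hp t, hq t]
  push_cast
  ring
end

section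
/- Let psi(p,q) = (1/4)(a p^4 + 4b p^3 q + 6c p^2 q^2 + 4d p q^3 + e q^4). If p, q : ℝ → ℝ satisfy the Hamilton equations -p' = ∂psi/∂q, q' = ∂psi/∂p, then p'' = 3 G p and q'' = 3 G q, where G = (b^2 - ac) p^4 + 2(bc - ad) p^3 q + (3c^2 - 2bd - ae) p^2 q^2 + 2(cd - be) p q^3 + (d^2 - ce) q^4. -/
theorem quartic_second_order (a b c d e : ℝ) (p q : ℝ → ℝ)
    (hp1 : Differentiable ℝ p) (hq1 : Differentiable ℝ q)
    (hp2 : Differentiable ℝ (deriv p)) (hq2 : Differentiable ℝ (deriv q))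
    (hp : ∀ t, deriv p t = -(b*(p t)^3 + 3*c*(p t)^2*(q t) + 3*d*(p t)*(q t)^2 + e*(q t)^3))
    (hq : ∀ t, deriv q t = a*(p t)^3 + 3*b*(p t)^2*(q t) + 3*c*(p t)*(q t)^2 + d*(q t)^3) :
    ∀ t, deriv (deriv p) t
        = 3 * ((b^2 - a*c)*(p t)^4 + 2*(b*c - a*d)*(p t)^3*(q t)
          + (3*c^2 - 2*b*d - a*e)*(p t)^2*(q t)^2 + 2*(c*d - b*e)*(p t)*(q t)^3
          + (d^2 - c*e)*(q t)^4) * p t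
      ∧ deriv (deriv q) t
        = 3 * ((b^2 - a*c)*(p t)^4 + 2*(b*c - a*d)*(p t)^3*(q t)
          + (3*c^2 - 2*b*d - a*e)*(p t)^2*(q t)^2 + 2*(c*d - b*e)*(p t)*(q t)^3
          + (d^2 - c*e)*(q t)^4) * q t := by
  intro t
  have hP : HasDerivAt p (deriv p t) t := (hp1 t).hasDerivAt
  have hQ : HasDerivAt q (deriv q t) t := (hq1 t).hasDerivAt
  have hDp : HasDerivAt (fun t => -(b*(p t)^3 + 3*c*(p t)^2*(q t) + 3*d*(p t)*(q t)^2 + e*(q t)^3))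
      (-(b*((3:ℕ)*(p t)^2*deriv p t)
        + ((3*c*((2:ℕ)*(p t)^1*deriv p t))*(q t) + (3*c*(p t)^2)*deriv q t)
        + ((3*d*deriv p t)*(q t)^2 + (3*d*(p t))*((2:ℕ)*(q t)^1*deriv q t))
        + e*((3:ℕ)*(q t)^2*deriv q t))) t := by
    exact (((((hP.pow 3).const_mul b).add (((hP.pow 2).const_mul (3*c)).mul hQ)).add
      ((hP.const_mul (3*d)).mul (hQ.pow 2))).add ((hQ.pow 3).const_mul e)).neg
  have hDq : HasDerivAt (fun t => a*(p t)^3 + 3*b*(p t)^2*(q t) + 3*c*(p t)*(q t)^2 + d*(q t)^3)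
      (a*((3:ℕ)*(p t)^2*deriv p t)
        + ((3*b*((2:ℕ)*(p t)^1*deriv p t))*(q t) + (3*b*(p t)^2)*deriv q t)
        + ((3*c*deriv p t)*(q t)^2 + (3*c*(p t))*((2:ℕ)*(q t)^1*deriv q t))
        + d*((3:ℕ)*(q t)^2*deriv q t)) t := by
    exact ((((hP.pow 3).const_mul a).add (((hP.pow 2).const_mul (3*b)).mul hQ)).add
      ((hP.const_mul (3*c)).mul (hQ.pow 2))).add ((hQ.pow 3).const_mul d)
  constructor
  · rw [funext hp, hDp.deriv, hp t, hq t]; push_cast; ring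
  · rw [funext hq, hDq.deriv, hp t, hq t]; push_cast; ring
end

section
/- Let p, q : ℝ → ℝ satisfy the Hamilton equations p' = -(b p^3 + 3c p^2 q + 3d p q^2 + e q^3), q' = a p^3 + 3b p^2 q + 3c p q^2 + d q^3, let G = (b^2 - ac) p^4 + 2(bc - ad) p^3 q + (3c^2 - 2bd - ae) p^2 q^2 + 2(cd - be) p q^3 + (d^2 - ce) q^4, set F = 4G, psi = (1/4)(a p^4 + 4b p^3 q + 6c p^2 q^2 + 4d p q^3 + e q^4), S = ae - 4bd + 3c^2, T = ace + 2bcd - ad^2 - b^2 e - c^3. Then along the curve, (F')^2 = 4 F^3 - g_2 F - g_3 with g_2 = S (16 psi)^2 and g_3 = T (16 psi)^3. -/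
set_option maxHeartbeats 1600000


theorem quartic_weierstrass_equation (a b c d e : ℝ) (p q : ℝ → ℝ)
    (hp1 : Differentiable ℝ p) (hq1 : Differentiable ℝ q)
    (hp : ∀ t, deriv p t = -(b*(p t)^3 + 3*c*(p t)^2*(q t) + 3*d*(p t)*(q t)^2 + e*(q t)^3))
    (hq : ∀ t, deriv q t = a*(p t)^3 + 3*b*(p t)^2*(q t) + 3*c*(p t)*(q t)^2 + d*(q t)^3) :
    ∀ t,
      let G := fun t => (b^2 - a*c)*(p t)^4 + 2*(b*c - a*d)*(p t)^3*(q t)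
        + (3*c^2 - 2*b*d - a*e)*(p t)^2*(q t)^2 + 2*(c*d - b*e)*(p t)*(q t)^3
        + (d^2 - c*e)*(q t)^4
      let F := fun t => 4 * G t
      let psi := (1/4) * (a*(p t)^4 + 4*b*(p t)^3*(q t) + 6*c*(p t)^2*(q t)^2
        + 4*d*(p t)*(q t)^3 + e*(q t)^4)
      let S := a*e - 4*b*d + 3*c^2
      let T := a*c*e + 2*b*c*d - a*d^2 - b^2*e - c^3
      (deriv F t)^2 = 4*(F t)^3 - (S*(16*psi)^2)*(F t) - T*(16*psi)^3 := by
  intro t G F psi S T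
  have hP : HasDerivAt p (deriv p t) t := (hp1 t).hasDerivAt
  have hQ : HasDerivAt q (deriv q t) t := (hq1 t).hasDerivAt
  have hF : HasDerivAt F
      (4 * ((b^2 - a*c)*(4*(p t)^3*deriv p t)
        + 2*(b*c - a*d)*((3*(p t)^2*deriv p t)*(q t) + (p t)^3*deriv q t)
        + (3*c^2 - 2*b*d - a*e)*((2*(p t)*deriv p t)*(q t)^2 + (p t)^2*(2*(q t)*deriv q t))
        + 2*(c*d - b*e)*(deriv p t*(q t)^3 + (p t)*(3*(q t)^2*deriv q t))
        + (d^2 - c*e)*(4*(q t)^3*deriv q t))) t := by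
    have h1 := ((hP.pow 4).const_mul (b^2 - a*c))
    have h2 := (((hP.pow 3).mul hQ).const_mul (2*(b*c - a*d)))
    have h3 := (((hP.pow 2).mul (hQ.pow 2)).const_mul (3*c^2 - 2*b*d - a*e))
    have h4 := ((hP.mul (hQ.pow 3)).const_mul (2*(c*d - b*e)))
    have h5 := ((hQ.pow 4).const_mul (d^2 - c*e))
    have := ((((h1.add h2).add h3).add h4).add h5).const_mul (4:ℝ)
    refine (this.congr_of_eventuallyEq (Filter.EventuallyEq.of_eq ?_)).congr_deriv ?_
    · funext s; simp [F, G]; ring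
    · push_cast [Pi.pow_apply]; ring
  rw [hF.deriv, hp t, hq t]
  simp only [F, G, psi, S, T]
  ring
end

section
/- Let p, q : ℝ → ℝ satisfy the cubic Hamilton equations p' = -(b p^2 + 2c p q + d q^2), q' = a p^2 + 2b p q + c q^2, let F = (b^2 - ac) p^2 + (bc - ad) p q + (c^2 - bd) q^2 and psi = (1/3)(a p^3 + 3b p^2 q + 3c p q^2 + d q^3). Then the quantity g_3 = 4 F^3 - (F')^2 is a constant of the motion (its time derivative vanishes). -/
theorem cubic_g3_conserved (a b c d : ℝ) (p q : ℝ → ℝ)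
    (hp1 : Differentiable ℝ p) (hq1 : Differentiable ℝ q)
    (hp2 : Differentiable ℝ (deriv p)) (hq2 : Differentiable ℝ (deriv q))
    (hp : ∀ t, deriv p t = -(b*(p t)^2 + 2*c*(p t)*(q t) + d*(q t)^2))
    (hq : ∀ t, deriv q t = a*(p t)^2 + 2*b*(p t)*(q t) + c*(q t)^2) :
    ∀ t, deriv (fun t =>
      4 * ((b^2 - a*c)*(p t)^2 + (b*c - a*d)*(p t)*(q t) + (c^2 - b*d)*(q t)^2)^3
      - (deriv (fun t =>
          (b^2 - a*c)*(p t)^2 + (b*c - a*d)*(p t)*(q t) + (c^2 - b*d)*(q t)^2) t)^2) t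
      = 0 := by
  have hF' : deriv (fun t =>
      (b^2 - a*c)*(p t)^2 + (b*c - a*d)*(p t)*(q t) + (c^2 - b*d)*(q t)^2)
      = fun t =>
        (3*a*b*c - 2*b^3 - a^2*d)*(p t)^3
        + (6*a*c^2 - 3*b^2*c - 3*a*b*d)*(p t)^2*(q t)
        + (3*b*c^2 - 6*b^2*d + 3*a*c*d)*(p t)*(q t)^2
        + (2*c^3 - 3*b*c*d + a*d^2)*(q t)^3 := by
    funext t
    have h1 : HasDerivAt p (deriv p t) t := (hp1 t).hasDerivAt
    have h2 : HasDerivAt q (deriv q t) t := (hq1 t).hasDerivAt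
    have hFd := (((h1.pow 2).const_mul (b^2 - a*c)).add
      ((h1.const_mul (b*c - a*d)).mul h2)).add ((h2.pow 2).const_mul (c^2 - b*d))
    erw [hFd.deriv, hp t, hq t]
    push_cast [Pi.pow_apply, Pi.add_apply, Pi.mul_apply, Pi.sub_apply]
    ring
  intro t
  simp only [hF']
  have h1 : HasDerivAt p (deriv p t) t := (hp1 t).hasDerivAt
  have h2 : HasDerivAt q (deriv q t) t := (hq1 t).hasDerivAt
  have hFd := (((h1.pow 2).const_mul (b^2 - a*c)).add
    ((h1.const_mul (b*c - a*d)).mul h2)).add ((h2.pow 2).const_mul (c^2 - b*d))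
  have hGd := (((((h1.pow 3).const_mul (3*a*b*c - 2*b^3 - a^2*d)).add
      (((h1.pow 2).const_mul (6*a*c^2 - 3*b^2*c - 3*a*b*d)).mul h2)).add
      ((h1.const_mul (3*b*c^2 - 6*b^2*d + 3*a*c*d)).mul (h2.pow 2))).add
      ((h2.pow 3).const_mul (2*c^3 - 3*b*c*d + a*d^2)))
  have hBig := ((hFd.pow 3).const_mul (4:ℝ)).sub (hGd.pow 2)
  erw [hBig.deriv, hp t, hq t]
  push_cast [Pi.pow_apply, Pi.add_apply, Pi.mul_apply, Pi.sub_apply]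
  ring
end

section
/- Let p, q : ℝ → ℝ satisfy the quartic Hamilton equations p' = -(b p^3 + 3c p^2 q + 3d p q^2 + e q^3), q' = a p^3 + 3b p^2 q + 3c p q^2 + d q^3, and let G = (b^2 - ac) p^4 + 2(bc - ad) p^3 q + (3c^2 - 2bd - ae) p^2 q^2 + 2(cd - be) p q^3 + (d^2 - ce) q^4 along the curve. Then p'' = 3 G p and q'' = 3 G q; equivalently, in vector form z = (p, q), z'' = 3 G z. -/
theorem quartic_vector_second_order (a b c d e : ℝ) (p q : ℝ → ℝ)
    (hp1 : Differentiable ℝ p) (hq1 : Differentiable ℝ q)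
    (hp2 : Differentiable ℝ (deriv p)) (hq2 : Differentiable ℝ (deriv q))
    (hp : ∀ t, deriv p t = -(b*(p t)^3 + 3*c*(p t)^2*(q t) + 3*d*(p t)*(q t)^2 + e*(q t)^3))
    (hq : ∀ t, deriv q t = a*(p t)^3 + 3*b*(p t)^2*(q t) + 3*c*(p t)*(q t)^2 + d*(q t)^3) :
    ∀ t,
      let G := (b^2 - a*c)*(p t)^4 + 2*(b*c - a*d)*(p t)^3*(q t)
        + (3*c^2 - 2*b*d - a*e)*(p t)^2*(q t)^2 + 2*(c*d - b*e)*(p t)*(q t)^3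
        + (d^2 - c*e)*(q t)^4
      deriv (deriv p) t = 3 * G * p t ∧ deriv (deriv q) t = 3 * G * q t := by
  intro t G
  have Hp := (hp1 t).hasDerivAt
  have Hq := (hq1 t).hasDerivAt
  have hbase := ((((Hp.pow 3).const_mul b).add
      (((Hp.pow 2).const_mul (3*c)).mul Hq)).add
      ((Hp.const_mul (3*d)).mul (Hq.pow 2))).add ((Hq.pow 3).const_mul e)
  have hbase2 := ((((Hp.pow 3).const_mul a).add
      (((Hp.pow 2).const_mul (3*b)).mul Hq)).add
      ((Hp.const_mul (3*c)).mul (Hq.pow 2))).add ((Hq.pow 3).const_mul d)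
  constructor
  · have hpfun : deriv p = fun t => -(b*(p t)^3 + 3*c*(p t)^2*(q t) + 3*d*(p t)*(q t)^2 + e*(q t)^3) :=
      funext hp
    rw [hpfun, show deriv (fun t => -(b*(p t)^3 + 3*c*(p t)^2*(q t) + 3*d*(p t)*(q t)^2 + e*(q t)^3)) t = _ from hbase.neg.deriv, hp t, hq t]
    simp only [Pi.pow_apply]
    push_cast
    ring
  · have hqfun : deriv q = fun t => a*(p t)^3 + 3*b*(p t)^2*(q t) + 3*c*(p t)*(q t)^2 + d*(q t)^3 :=
      funext hq
    rw [hqfun, show deriv (fun t => a*(p t)^3 + 3*b*(p t)^2*(q t) + 3*c*(p t)*(q t)^2 + d*(q t)^3) t = _ from hbase2.deriv, hp t, hq t]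
    simp only [Pi.pow_apply]
    push_cast
    ring
end
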